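/- Let A be an n×n real symmetric matrix regarded as a complex matrix, let τ ∈ ℝ, let u ≠ v be indices, and let γ ∈ ℂ with |γ| = 1. If exp(−i τ A) applied to the standard basis vector e_u equals γ · e_v, then exp(−i τ A) applied to e_v equals γ · e_u, and consequently exp(−i (2τ) A) applied to e_u equals γ² · e_u. -/

import Mathlib

open Matrix

/-- if the quantum walk `exp(-iτA)` generated by a real symmetric matrix `A`
maps `e_u` to `γ e_v` (perfect state transfer from `u` to `v` at time `τ`, with `|γ| = 1`),
then it maps `e_v` to `γ e_u`, and `exp(-i(2τ)A)` maps `e_u` to `γ² e_u`. -/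
theorem stmt8 {n : ℕ} (A : Matrix (Fin n) (Fin n) ℝ) (hA : A.IsSymm)
    (τ : ℝ) (u v : Fin n) (huv : u ≠ v) (γ : ℂ) (hγ : ‖γ‖ = 1)
    (hPST : (NormedSpace.exp ((-(Complex.I * (τ : ℂ))) • A.map Complex.ofReal)).mulVec
        (Pi.single u 1 : Fin n → ℂ) = γ • (Pi.single v 1 : Fin n → ℂ)) :
    (NormedSpace.exp ((-(Complex.I * (τ : ℂ))) • A.map Complex.ofReal)).mulVec
        (Pi.single v 1 : Fin n → ℂ) = γ • (Pi.single u 1 : Fin n → ℂ) ∧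
      (NormedSpace.exp ((-(Complex.I * ((2 * τ : ℝ) : ℂ))) • A.map Complex.ofReal)).mulVec
        (Pi.single u 1 : Fin n → ℂ) = γ ^ 2 • (Pi.single u 1 : Fin n → ℂ) := by
  set B : Matrix (Fin n) (Fin n) ℂ := A.map Complex.ofReal with hB
  set M : Matrix (Fin n) (Fin n) ℂ := (-(Complex.I * (τ : ℂ))) • B with hM
  set U : Matrix (Fin n) (Fin n) ℂ := NormedSpace.exp M with hU
  -- B is symmetric
  have hBsymm : B.IsSymm := hA.map _
  have hMsymm : M.IsSymm := by
    unfold Matrix.IsSymm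
    rw [hM, Matrix.transpose_smul, hBsymm]
  -- U is symmetric
  have hUsymm : Uᵀ = U := hMsymm.exp
  -- Mᴴ = -M
  have hBH : Bᴴ = B := by
    ext i j
    simp only [hB, Matrix.conjTranspose_apply, Matrix.map_apply, Complex.conj_ofReal]
    exact (Complex.conj_ofReal _).trans (congrArg Complex.ofReal (hA.apply i j))
  have hMH : Mᴴ = -M := by
    rw [hM, Matrix.conjTranspose_smul, hBH, ← neg_smul]
    congr 1
    simp [Complex.ext_iff]
  -- Uᴴ = exp(-M)
  have hUH : Uᴴ = NormedSpace.exp (-M) := by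
    rw [hU, ← Matrix.exp_conjTranspose, hMH]
  -- exp(-M) * U = 1
  have hinv : NormedSpace.exp (-M) * U = 1 := by
    rw [hU, ← Matrix.exp_add_of_commute (-M) M (Commute.neg_left (Commute.refl M)),
      neg_add_cancel, NormedSpace.exp_zero]
  -- key equation
  have key : γ • (Uᴴ.mulVec (Pi.single v 1 : Fin n → ℂ)) = (Pi.single u 1 : Fin n → ℂ) := by
    rw [hUH, ← Matrix.mulVec_smul, ← hPST, Matrix.mulVec_mulVec, hinv, Matrix.one_mulVec]
  have hγγ : γ * (starRingEnd ℂ) γ = 1 := by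
    rw [Complex.mul_conj]
    norm_cast
    rw [← Complex.sq_norm, hγ, one_pow]
  -- entrywise: U j v = γ * (e_u j)
  have hcol : ∀ j, U j v = γ * (Pi.single u 1 : Fin n → ℂ) j := by
    intro j
    have h1 := congrFun key j
    simp only [Pi.smul_apply, smul_eq_mul, Matrix.mulVec_single_one, Matrix.col_apply, mul_one,
      Matrix.conjTranspose_apply] at h1
    have h2 : U v j = U j v := by
      nth_rewrite 1 [← hUsymm]
      rw [Matrix.transpose_apply]
    rw [h2, Complex.star_def] at h1
    have h3 := congrArg (starRingEnd ℂ) h1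
    simp only [_root_.map_mul, Complex.conj_conj] at h3
    have h4 : (starRingEnd ℂ) ((Pi.single u 1 : Fin n → ℂ) j) = (Pi.single u 1 : Fin n → ℂ) j := by
      by_cases hj : j = u
      · subst hj; simp
      · simp [Pi.single_eq_of_ne hj]
    rw [h4] at h3
    calc U j v = (γ * (starRingEnd ℂ) γ) * U j v := by rw [hγγ, one_mul]
      _ = γ * ((starRingEnd ℂ) γ * U j v) := by ring
      _ = γ * (Pi.single u 1 : Fin n → ℂ) j := by rw [h3]
  have part1 : U.mulVec (Pi.single v 1 : Fin n → ℂ) = γ • (Pi.single u 1 : Fin n → ℂ) := by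
    ext j
    simp only [Matrix.mulVec_single_one, Matrix.col_apply, mul_one, Pi.smul_apply, smul_eq_mul]
    exact hcol j
  refine ⟨part1, ?_⟩
  have h2τ : (-(Complex.I * ((2 * τ : ℝ) : ℂ))) • B = M + M := by
    rw [hM, ← add_smul]
    congr 1
    push_cast
    ring
  rw [h2τ, Matrix.exp_add_of_commute M M (Commute.refl M), ← hU,
    ← Matrix.mulVec_mulVec, hPST, Matrix.mulVec_smul, part1, smul_smul, sq]
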